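/- Let φ_1 ≥ ... ≥ φ_N ≥ 0 with ∑_i φ_i = 1. The empirical spectral measure M_φ^{(N)}(X) = -∑_i φ_i·X_{i:N} equals the infimum over (ψ_1,...,ψ_{N-1}) ∈ ℝ^{N-1} of the sorting-free function ∑_{j=1}^{N-1} (φ_{j+1}-φ_j)·( j·ψ_j - ∑_{i=1}^N max(ψ_j - X_i, 0) ) - φ_N·∑_{i=1}^N X_i, and this infimum is attained. -/

import Mathlib

open Finset

private lemma card_filter_lt {N k : ℕ} (hk : k ≤ N) :
    (univ.filter (fun i : Fin N => (i : ℕ) < k)).card = k := by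
  have : univ.filter (fun i : Fin N => (i : ℕ) < k)
      = Finset.map (Fin.castLEEmb hk) univ := by
    ext i
    simp only [mem_filter, mem_univ, true_and, Finset.mem_map]
    constructor
    · intro h
      exact ⟨⟨(i : ℕ), h⟩, rfl⟩
    · rintro ⟨j, -, rfl⟩
      simpa using j.isLt
  rw [this, Finset.card_map, Finset.card_univ, Fintype.card_fin]

private lemma sorted_lb {N : ℕ} (Y : Fin N → ℝ) (k : ℕ) (hk : k ≤ N) (t : ℝ) :
    (k : ℝ) * t - ∑ i, max (t - Y i) 0
      ≤ ∑ i ∈ univ.filter (fun i : Fin N => (i : ℕ) < k), Y i := by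
  have h1 : ∑ i ∈ univ.filter (fun i : Fin N => (i : ℕ) < k), max (t - Y i) 0
      ≤ ∑ i, max (t - Y i) 0 :=
    Finset.sum_le_sum_of_subset_of_nonneg (filter_subset _ _)
      (fun i _ _ => le_max_right _ _)
  have h2 : (k : ℝ) * t
      ≤ ∑ i ∈ univ.filter (fun i : Fin N => (i : ℕ) < k), (Y i + max (t - Y i) 0) := by
    calc (k : ℝ) * t = ∑ _i ∈ univ.filter (fun i : Fin N => (i : ℕ) < k), t := by
          rw [Finset.sum_const, card_filter_lt hk]; ring
      _ ≤ _ := Finset.sum_le_sum (fun i _ => by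
          have := le_max_left (t - Y i) (0 : ℝ); linarith)
  rw [Finset.sum_add_distrib] at h2
  linarith

private lemma sorted_eq {N : ℕ} (Y : Fin N → ℝ) (hY : Monotone Y) (k : ℕ)
    (hk0 : 0 < k) (hk : k ≤ N) :
    ∑ i, max (Y ⟨k - 1, by omega⟩ - Y i) 0
      = (k : ℝ) * Y ⟨k - 1, by omega⟩
        - ∑ i ∈ univ.filter (fun i : Fin N => (i : ℕ) < k), Y i := by
  have hmax : ∀ i : Fin N, max (Y ⟨k - 1, by omega⟩ - Y i) 0
      = if (i : ℕ) < k then Y ⟨k - 1, by omega⟩ - Y i else 0 := by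
    intro i
    by_cases h : (i : ℕ) < k
    · have : Y i ≤ Y ⟨k - 1, by omega⟩ := hY (by simp [Fin.le_def]; omega)
      simp [h, max_eq_left, this, sub_nonneg.mpr this]
    · have : Y ⟨k - 1, by omega⟩ ≤ Y i := hY (by simp [Fin.le_def]; omega)
      simp [h, max_eq_right, sub_nonpos.mpr this]
  rw [Finset.sum_congr rfl (fun i _ => hmax i), Finset.sum_ite, Finset.sum_const_zero,
    add_zero, Finset.sum_sub_distrib, Finset.sum_const, card_filter_lt hk]
  simp [mul_comm]

private lemma telescope_aux {N : ℕ} (hN : 0 < N) (φ : Fin N → ℝ) (i : Fin N) :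
    ∑ j : Fin (N - 1), (if (i : ℕ) ≤ (j : ℕ) then
        φ ⟨(j : ℕ) + 1, by have hj := j.isLt; clear * - hj; omega⟩ - φ ⟨(j : ℕ), by have hj := j.isLt; clear * - hj; omega⟩ else 0)
      = φ ⟨N - 1, Nat.sub_lt hN Nat.one_pos⟩ - φ i := by
  set p : ℕ → ℝ := fun m => if h : m < N then φ ⟨m, h⟩ else 0 with hp
  have hstep : ∀ j : Fin (N - 1),
      (if (i : ℕ) ≤ (j : ℕ) then
        φ ⟨(j : ℕ) + 1, by have hj := j.isLt; clear * - hj; omega⟩ - φ ⟨(j : ℕ), by have hj := j.isLt; clear * - hj; omega⟩ else 0)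
      = (fun m => if (i : ℕ) ≤ m then p (m + 1) - p m else 0) (j : ℕ) := by
    intro j
    have h1 : (j : ℕ) + 1 < N := by have hj := j.isLt; clear * - hj; omega
    have h2 : (j : ℕ) < N := by omega
    simp only [hp, dif_pos h1, dif_pos h2]
  rw [Finset.sum_congr rfl (fun j _ => hstep j),
    Fin.sum_univ_eq_sum_range (fun m => if (i : ℕ) ≤ m then p (m + 1) - p m else 0) (N - 1)]
  have hfilter : Finset.filter (fun m => (i : ℕ) ≤ m) (range (N - 1)) = Ico (i : ℕ) (N - 1) := by
    ext m
    simp only [mem_filter, mem_range, mem_Ico]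
    omega
  rw [Finset.sum_ite, Finset.sum_const_zero, add_zero, hfilter,
    Finset.sum_Ico_eq_sum_range]
  have : ∑ m ∈ range (N - 1 - (i : ℕ)), (p ((i : ℕ) + m + 1) - p ((i : ℕ) + m))
      = ∑ m ∈ range (N - 1 - (i : ℕ)),
        ((fun m => p ((i : ℕ) + m)) (m + 1) - (fun m => p ((i : ℕ) + m)) m) := by
    apply Finset.sum_congr rfl; intro m _; simp [Nat.add_assoc]
  rw [this, Finset.sum_range_sub (fun m => p ((i : ℕ) + m))]
  have hi : (i : ℕ) < N := i.isLt
  rcases le_or_gt (N - 1) (i : ℕ) with h | h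
  · have h0 : N - 1 - (i : ℕ) = 0 := by omega
    have hieq : i = (⟨N - 1, Nat.sub_lt hN Nat.one_pos⟩ : Fin N) := Fin.ext (by simp only []; omega)
    rw [h0, hieq]
    simp
  · have h1 : (i : ℕ) + (N - 1 - (i : ℕ)) = N - 1 := by omega
    show p ((i : ℕ) + (N - 1 - (i : ℕ))) - p ((i : ℕ) + 0) = _
    rw [h1, Nat.add_zero]
    simp only [hp]
    rw [dif_pos (show N - 1 < N by omega), dif_pos hi, Fin.eta]

private lemma abel_id {N : ℕ} (hN : 0 < N) (φ Y : Fin N → ℝ) :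
    ∑ j : Fin (N - 1),
      (φ ⟨(j : ℕ) + 1, by have hj := j.isLt; clear * - hj; omega⟩ - φ ⟨(j : ℕ), by have hj := j.isLt; clear * - hj; omega⟩) *
        (∑ i ∈ univ.filter (fun i : Fin N => (i : ℕ) < (j : ℕ) + 1), Y i)
      - φ ⟨N - 1, Nat.sub_lt hN Nat.one_pos⟩ * ∑ i, Y i = -∑ i, φ i * Y i := by
  have key : ∑ j : Fin (N - 1),
      (φ ⟨(j : ℕ) + 1, by have hj := j.isLt; clear * - hj; omega⟩ - φ ⟨(j : ℕ), by have hj := j.isLt; clear * - hj; omega⟩) *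
        (∑ i ∈ univ.filter (fun i : Fin N => (i : ℕ) < (j : ℕ) + 1), Y i)
      = ∑ i : Fin N, (φ ⟨N - 1, Nat.sub_lt hN Nat.one_pos⟩ - φ i) * Y i := by
    have expand : ∀ j : Fin (N - 1),
        (φ ⟨(j : ℕ) + 1, by have hj := j.isLt; clear * - hj; omega⟩ - φ ⟨(j : ℕ), by have hj := j.isLt; clear * - hj; omega⟩) *
          (∑ i ∈ univ.filter (fun i : Fin N => (i : ℕ) < (j : ℕ) + 1), Y i)
        = ∑ i : Fin N, (if (i : ℕ) ≤ (j : ℕ) then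
            (φ ⟨(j : ℕ) + 1, by have hj := j.isLt; clear * - hj; omega⟩ - φ ⟨(j : ℕ), by have hj := j.isLt; clear * - hj; omega⟩)
              * Y i else 0) := by
      intro j
      rw [Finset.mul_sum, Finset.sum_ite, Finset.sum_const_zero, add_zero]
      apply Finset.sum_congr
      · ext i; simp only [mem_filter, mem_univ, true_and]; omega
      · intros; rfl
    rw [Finset.sum_congr rfl (fun j _ => expand j), Finset.sum_comm]
    apply Finset.sum_congr rfl
    intro i _
    have hite : ∀ j : Fin (N - 1),
        (if (i : ℕ) ≤ (j : ℕ) then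
          (φ ⟨(j : ℕ) + 1, by have hj := j.isLt; clear * - hj; omega⟩ - φ ⟨(j : ℕ), by have hj := j.isLt; clear * - hj; omega⟩)
            * Y i else 0)
        = (if (i : ℕ) ≤ (j : ℕ) then
          (φ ⟨(j : ℕ) + 1, by have hj := j.isLt; clear * - hj; omega⟩ - φ ⟨(j : ℕ), by have hj := j.isLt; clear * - hj; omega⟩)
            else 0) * Y i := by
      intro j; split <;> simp
    rw [Finset.sum_congr rfl (fun j _ => hite j), ← Finset.sum_mul, telescope_aux hN φ i]
  rw [key]
  simp only [sub_mul]
  rw [Finset.sum_sub_distrib, ← Finset.mul_sum]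
  ring

theorem stmt_9 (N : ℕ) (hN : 0 < N) (φ : Fin N → ℝ)
    (hmono : ∀ i j : Fin N, i ≤ j → φ j ≤ φ i)
    (hpos : ∀ i, 0 ≤ φ i) (hsum : ∑ i, φ i = 1)
    (X : Fin N → ℝ) :
    IsLeast
      (Set.range fun ψ : Fin (N - 1) → ℝ =>
        (∑ j : Fin (N - 1),
          (φ ⟨(j : ℕ) + 1, by have := j.isLt; omega⟩ - φ ⟨(j : ℕ), by have := j.isLt; omega⟩) *
            (((j : ℕ) + 1 : ℝ) * ψ j - ∑ i, max (ψ j - X i) 0))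
          - φ ⟨N - 1, by omega⟩ * ∑ i, X i)
      (-∑ i, φ i * (X ∘ Tuple.sort X) i) := by
  set Y : Fin N → ℝ := X ∘ Tuple.sort X with hYdef
  have hmonoY : Monotone Y := Tuple.monotone_sort X
  have hsumX : ∑ i, X i = ∑ i, Y i :=
    (Equiv.sum_comp (Tuple.sort X) X).symm
  have hmaxsum : ∀ t : ℝ, ∑ i, max (t - X i) 0 = ∑ i, max (t - Y i) 0 := fun t =>
    (Equiv.sum_comp (Tuple.sort X) (fun i => max (t - X i) 0)).symm
  have habel := abel_id hN φ Y
  constructor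
  · refine ⟨fun j : Fin (N - 1) => Y ⟨(j : ℕ), by have := j.isLt; omega⟩, ?_⟩
    have hterm : ∀ j : Fin (N - 1),
        (φ ⟨(j : ℕ) + 1, by have := j.isLt; omega⟩ - φ ⟨(j : ℕ), by have := j.isLt; omega⟩) *
          (((j : ℕ) + 1 : ℝ) * Y ⟨(j : ℕ), by have := j.isLt; omega⟩
            - ∑ i, max (Y ⟨(j : ℕ), by have := j.isLt; omega⟩ - X i) 0)
        = (φ ⟨(j : ℕ) + 1, by have := j.isLt; omega⟩ - φ ⟨(j : ℕ), by have := j.isLt; omega⟩) *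
          (∑ i ∈ univ.filter (fun i : Fin N => (i : ℕ) < (j : ℕ) + 1), Y i) := by
      intro j
      have hkN : (j : ℕ) + 1 ≤ N := by have := j.isLt; omega
      have heq := sorted_eq Y hmonoY ((j : ℕ) + 1) (by omega) hkN
      simp only [Nat.add_sub_cancel] at heq
      rw [hmaxsum, heq]
      push_cast
      ring
    have hfin : ∑ j : Fin (N - 1),
        (φ ⟨(j : ℕ) + 1, by have := j.isLt; omega⟩ - φ ⟨(j : ℕ), by have := j.isLt; omega⟩) *
          (((j : ℕ) + 1 : ℝ) * Y ⟨(j : ℕ), by have := j.isLt; omega⟩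
            - ∑ i, max (Y ⟨(j : ℕ), by have := j.isLt; omega⟩ - X i) 0)
        - φ ⟨N - 1, by omega⟩ * ∑ i, X i = -∑ i, φ i * Y i := by
      rw [Finset.sum_congr rfl (fun j _ => hterm j), hsumX, habel]
    exact hfin
  · rintro v ⟨ψ, rfl⟩
    have hterm : ∀ j ∈ (univ : Finset (Fin (N - 1))),
        (φ ⟨(j : ℕ) + 1, by have := j.isLt; omega⟩ - φ ⟨(j : ℕ), by have := j.isLt; omega⟩) *
          (∑ i ∈ univ.filter (fun i : Fin N => (i : ℕ) < (j : ℕ) + 1), Y i)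
        ≤ (φ ⟨(j : ℕ) + 1, by have := j.isLt; omega⟩ - φ ⟨(j : ℕ), by have := j.isLt; omega⟩) *
          (((j : ℕ) + 1 : ℝ) * ψ j - ∑ i, max (ψ j - X i) 0) := by
      intro j _
      apply mul_le_mul_of_nonpos_left
      · rw [hmaxsum]
        have h := sorted_lb Y ((j : ℕ) + 1) (by have := j.isLt; omega) (ψ j)
        push_cast at h ⊢
        exact h
      · have : φ ⟨(j : ℕ) + 1, by have := j.isLt; omega⟩
            ≤ φ ⟨(j : ℕ), by have := j.isLt; omega⟩ :=
          hmono _ _ (by simp [Fin.le_def])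
        linarith
    have hsum_le := Finset.sum_le_sum hterm
    have hgoal : -∑ i, φ i * Y i ≤ ∑ j : Fin (N - 1),
        (φ ⟨(j : ℕ) + 1, by have := j.isLt; omega⟩ - φ ⟨(j : ℕ), by have := j.isLt; omega⟩) *
          (((j : ℕ) + 1 : ℝ) * ψ j - ∑ i, max (ψ j - X i) 0)
        - φ ⟨N - 1, by omega⟩ * ∑ i, X i := by
      rw [hsumX]
      linarith
    exact hgoal
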